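/- arXiv:2010.03394 — 2 statements merged into one kernel-verified Lean document; each statement's English description precedes it below -/
import Mathlib

section
/- Let 𝒢 = (G_n,‖·‖'_n)_{n∈ℕ} be a family of metric groups and (H,‖·‖) a metric group, and 𝒰 a nonprincipal ultrafilter on ℕ; assume 𝒢 and the constant family (H,‖·‖)_{n∈ℕ} satisfy Assumption (A). Suppose the metric ultraproduct 𝒢*_met,fin is a simple group. Assume the following approximation property: for every t > 0, every ε > 0, and all h₁,h₂ ∈ H with ‖h₁‖,‖h₂‖ ≤ t, for 𝒰-many n ∈ ℕ there exist g₁,g₂ ∈ G_n and a group homomorphism φ_n : G_n → H which is isometric (‖φ_n(g)‖ = ‖g‖'_n for all g ∈ G_n) and satisfies ‖φ_n(g_i)·h_i⁻¹‖ < ε for i = 1,2. Then the finitary metric ultrapower H*_met,fin of H with respect to 𝒰 is a simple group. -/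
open Filter Set Pointwise ENNReal

/-- `CN N g` : the set of all products of at most `N` conjugates of `g` and `g⁻¹`. -/
def CN {H : Type*} [Group H] (N : ℕ) (g : H) : Set H :=
  ⋃ m ≤ N, ({x | IsConj g x} ∪ {x | IsConj g⁻¹ x}) ^ m

/-- A family of groups equipped with conjugation-invariant pseudo-norms with values in `[0,∞]`. -/
structure PMFamily where
  G : ℕ → Type
  grp : ∀ n, Group (G n)
  ν : ∀ n, G n → ℝ≥0∞
  norm_one : ∀ n, ν n 1 = 0
  norm_mul : ∀ n (g h : G n), ν n (g * h) ≤ ν n g + ν n h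
  norm_inv : ∀ n (g : G n), ν n g⁻¹ = ν n g
  norm_conj : ∀ n (g h : G n), ν n (h * g * h⁻¹) = ν n g

attribute [instance] PMFamily.grp

namespace PMFamily

variable (𝒢 : PMFamily) (U : Ultrafilter ℕ)

/-- The subgroup of infinitesimal sequences. -/
def E : Subgroup (∀ n, 𝒢.G n) where
  carrier := {g | ∀ ε : ℝ≥0∞, 0 < ε → {n | 𝒢.ν n (g n) < ε} ∈ U}
  one_mem' := by
    intro ε hε
    have h : {n | 𝒢.ν n ((1 : ∀ n, 𝒢.G n) n) < ε} = Set.univ := by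
      ext n; simpa [𝒢.norm_one n] using hε
    show {n | 𝒢.ν n ((1 : ∀ n, 𝒢.G n) n) < ε} ∈ U
    rw [h]
    exact Filter.univ_mem
  mul_mem' := by
    intro g h hg hh ε hε
    have h2 : (0 : ℝ≥0∞) < ε / 2 := ENNReal.half_pos hε.ne'
    have key : {n | 𝒢.ν n (g n) < ε / 2} ∩ {n | 𝒢.ν n (h n) < ε / 2} ⊆
        {n | 𝒢.ν n ((g * h) n) < ε} := by
      rintro n ⟨h1, h1'⟩
      simp only [Set.mem_setOf_eq] at h1 h1' ⊢
      calc 𝒢.ν n ((g * h) n) = 𝒢.ν n (g n * h n) := rfl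
        _ ≤ 𝒢.ν n (g n) + 𝒢.ν n (h n) := 𝒢.norm_mul n _ _
        _ < ε / 2 + ε / 2 := ENNReal.add_lt_add h1 h1'
        _ = ε := ENNReal.add_halves ε
    exact Filter.mem_of_superset (Filter.inter_mem (hg _ h2) (hh _ h2)) key
  inv_mem' := by
    intro g hg ε hε
    have h : {n | 𝒢.ν n (g⁻¹ n) < ε} = {n | 𝒢.ν n (g n) < ε} := by
      ext n; simp only [Set.mem_setOf_eq, Pi.inv_apply, 𝒢.norm_inv n]
    show {n | 𝒢.ν n (g⁻¹ n) < ε} ∈ U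
    rw [h]
    exact hg ε hε

theorem mem_E {g : ∀ n, 𝒢.G n} :
    g ∈ 𝒢.E U ↔ ∀ ε : ℝ≥0∞, 0 < ε → {n | 𝒢.ν n (g n) < ε} ∈ U := Iff.rfl

instance normal_E : (𝒢.E U).Normal := by
  constructor
  intro g hg h
  rw [mem_E] at hg ⊢
  intro ε hε
  have heq : {n | 𝒢.ν n ((h * g * h⁻¹) n) < ε} = {n | 𝒢.ν n (g n) < ε} := by
    ext n
    simp only [Set.mem_setOf_eq, Pi.mul_apply, Pi.inv_apply, 𝒢.norm_conj n]
  rw [heq]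
  exact hg ε hε

/-- The metric ultraproduct. -/
abbrev Q := (∀ n, 𝒢.G n) ⧸ 𝒢.E U

/-- The limit of the norms along the ultrafilter, on the product group. -/
noncomputable def pnorm (g : ∀ n, 𝒢.G n) : ℝ≥0∞ :=
  Filter.limsup (fun n => 𝒢.ν n (g n)) U

/-- The induced norm on the metric ultraproduct. -/
noncomputable def qnorm (x : 𝒢.Q U) : ℝ≥0∞ := 𝒢.pnorm U (Quotient.out x)

/-- The open ball of radius `ε` around the identity in the metric ultraproduct. -/
def ball (ε : ℝ≥0∞) : Set (𝒢.Q U) := {x | 𝒢.qnorm U x < ε}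

/-- Metrically internal subsets of the metric ultraproduct. -/
def internalSet (Xn : ∀ n, Set (𝒢.G n)) : Set (𝒢.Q U) :=
  (QuotientGroup.mk : (∀ n, 𝒢.G n) → 𝒢.Q U) '' {g | ∀ n, g n ∈ Xn n}

/-- The finitary subgroup of the metric ultraproduct: classes of uniformly bounded
sequences (equivalently, elements of finite norm). -/
def finSubgroup : Subgroup (𝒢.Q U) where
  carrier := {x | ∃ g : ∀ n, 𝒢.G n, QuotientGroup.mk g = x ∧
    ∃ C : ℝ≥0∞, C ≠ ⊤ ∧ ∀ n, 𝒢.ν n (g n) ≤ C}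
  one_mem' := ⟨1, rfl, 0, by simp, fun n => by simp [𝒢.norm_one n]⟩
  mul_mem' := by
    rintro x y ⟨g, rfl, C, hC, hg⟩ ⟨h, rfl, D, hD, hh⟩
    refine ⟨g * h, rfl, C + D, ENNReal.add_ne_top.mpr ⟨hC, hD⟩, fun n => ?_⟩
    exact le_trans (𝒢.norm_mul n (g n) (h n)) (add_le_add (hg n) (hh n))
  inv_mem' := by
    rintro x ⟨g, rfl, C, hC, hg⟩
    exact ⟨g⁻¹, rfl, C, hC, fun n => by rw [Pi.inv_apply, 𝒢.norm_inv n]; exact hg n⟩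

end PMFamily

section AuxNorm

variable {G : Type*} [Group G]

/-- Abstract conjugation-invariant pseudonorm axioms. -/
structure IsGNorm (ν : G → ℝ≥0∞) : Prop where
  one : ν 1 = 0
  mul : ∀ a b : G, ν (a * b) ≤ ν a + ν b
  inv : ∀ a : G, ν a⁻¹ = ν a
  conj : ∀ a b : G, ν (b * a * b⁻¹) = ν a

namespace IsGNorm

variable {ν : G → ℝ≥0∞}

lemma conj' (hν : IsGNorm ν) (a k : G) : ν (k⁻¹ * a * k) = ν a := by
  have h := hν.conj a k⁻¹
  simpa using h

lemma dist_rev (hν : IsGNorm ν) (p q : G) : ν (p * q⁻¹) = ν (q⁻¹ * p) := by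
  have h := hν.conj (q⁻¹ * p) q
  have h2 : q * (q⁻¹ * p) * q⁻¹ = p * q⁻¹ := by group
  rw [h2] at h; exact h

lemma dist_symm (hν : IsGNorm ν) (p q : G) : ν (p * q⁻¹) = ν (p⁻¹ * q) := by
  rw [hν.dist_rev]
  have h2 : q⁻¹ * p = (p⁻¹ * q)⁻¹ := by group
  rw [h2, hν.inv]

lemma dist_swap (hν : IsGNorm ν) (p q : G) : ν (p * q⁻¹) = ν (q * p⁻¹) := by
  have h2 : q * p⁻¹ = (p * q⁻¹)⁻¹ := by group
  rw [h2, hν.inv]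

lemma dist_tri (hν : IsGNorm ν) (p q r : G) : ν (p * r⁻¹) ≤ ν (p * q⁻¹) + ν (q * r⁻¹) := by
  have h2 : p * r⁻¹ = (p * q⁻¹) * (q * r⁻¹) := by group
  rw [h2]; exact hν.mul _ _

end IsGNorm

/-- `w` is a product of at most `N` conjugates of `g` or `g⁻¹`,
with conjugators of norm `≤ C`. -/
def IsPC (ν : G → ℝ≥0∞) (C : ℝ≥0∞) (N : ℕ) (g w : G) : Prop :=
  ∃ L : List G, L.length ≤ N ∧
    (∀ f ∈ L, ∃ k, ν k ≤ C ∧ (f = k⁻¹ * g * k ∨ f = k⁻¹ * g⁻¹ * k)) ∧ w = L.prod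

lemma isPC_one (ν : G → ℝ≥0∞) (C : ℝ≥0∞) (N : ℕ) (g : G) : IsPC ν C N g 1 :=
  ⟨[], by simp, by simp, rfl⟩

lemma IsPC.mono {ν : G → ℝ≥0∞} {C C' : ℝ≥0∞} {N N' : ℕ} {g w : G}
    (hC : C ≤ C') (hN : N ≤ N') (h : IsPC ν C N g w) : IsPC ν C' N' g w := by
  obtain ⟨L, hL, hf, hw⟩ := h
  refine ⟨L, hL.trans hN, fun f hfL => ?_, hw⟩
  obtain ⟨k, hk, hk'⟩ := hf f hfL
  exact ⟨k, hk.trans hC, hk'⟩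

lemma IsPC.mul {ν : G → ℝ≥0∞} {C : ℝ≥0∞} {N N' : ℕ} {g w w' : G}
    (h : IsPC ν C N g w) (h' : IsPC ν C N' g w') : IsPC ν C (N + N') g (w * w') := by
  obtain ⟨L, hL, hf, rfl⟩ := h; obtain ⟨M, hM, hg, rfl⟩ := h'
  refine ⟨L ++ M, ?_, ?_, (List.prod_append).symm⟩
  · simpa using Nat.add_le_add hL hM
  · intro f hf'
    rcases List.mem_append.1 hf' with h | h
    exacts [hf f h, hg f h]

lemma IsPC.inv {ν : G → ℝ≥0∞} {C : ℝ≥0∞} {N : ℕ} {g w : G}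
    (h : IsPC ν C N g w) : IsPC ν C N g w⁻¹ := by
  obtain ⟨L, hL, hf, rfl⟩ := h
  refine ⟨(L.map fun x => x⁻¹).reverse, by simpa using hL, ?_, ?_⟩
  · intro f hfL
    simp only [List.mem_reverse, List.mem_map] at hfL
    obtain ⟨f₀, hf₀, rfl⟩ := hfL
    obtain ⟨k, hk, hcase⟩ := hf f₀ hf₀
    rcases hcase with h | h
    · exact ⟨k, hk, Or.inr (by rw [h]; group)⟩
    · exact ⟨k, hk, Or.inl (by rw [h]; group)⟩
  · rw [List.prod_inv_reverse]

lemma IsPC.map {H : Type*} [Group H] {ν : G → ℝ≥0∞} {ν' : H → ℝ≥0∞}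
    (φ : G →* H) (hiso : ∀ a, ν' (φ a) = ν a) {C : ℝ≥0∞} {N : ℕ} {g w : G}
    (h : IsPC ν C N g w) : IsPC ν' C N (φ g) (φ w) := by
  obtain ⟨L, hL, hf, rfl⟩ := h
  refine ⟨L.map φ, by simpa using hL, ?_, map_list_prod φ L⟩
  intro f hfL
  simp only [List.mem_map] at hfL
  obtain ⟨f₀, hf₀, rfl⟩ := hfL
  obtain ⟨k, hk, hcase⟩ := hf f₀ hf₀
  refine ⟨φ k, by rw [hiso]; exact hk, ?_⟩
  rcases hcase with h | h
  · exact Or.inl (by rw [h]; simp)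
  · exact Or.inr (by rw [h]; simp)

lemma IsPC.cons_decomp {ν : G → ℝ≥0∞} {C : ℝ≥0∞} {N : ℕ} {g w : G}
    (h : IsPC ν C (N + 1) g w) :
    w = 1 ∨ ∃ k v, ν k ≤ C ∧ (w = (k⁻¹ * g * k) * v ∨ w = (k⁻¹ * g⁻¹ * k) * v) ∧
      IsPC ν C N g v := by
  obtain ⟨L, hL, hf, rfl⟩ := h
  cases L with
  | nil => exact Or.inl rfl
  | cons f T =>
      obtain ⟨k, hk, hcase⟩ := hf f List.mem_cons_self
      refine Or.inr ⟨k, T.prod, hk, ?_,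
        ⟨T, by simpa using Nat.succ_le_succ_iff.mp (by simpa using hL),
          fun x hx => hf x (List.mem_cons_of_mem f hx), rfl⟩⟩
      rw [List.prod_cons]
      rcases hcase with h | h
      · exact Or.inl (by rw [h])
      · exact Or.inr (by rw [h])

lemma IsGNorm.prod_dist {ν : G → ℝ≥0∞} (hν : IsGNorm ν) {δ : ℝ≥0∞} {L M : List G}
    (h : List.Forall₂ (fun a b => ν (a * b⁻¹) ≤ δ) L M) :
    ν (L.prod * M.prod⁻¹) ≤ L.length * δ := by
  induction h with
  | nil => simp [hν.one]
  | @cons a b L' M' hab h ih =>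
      have key : (a * L'.prod) * (b * M'.prod)⁻¹
          = (a * (L'.prod * M'.prod⁻¹) * a⁻¹) * (a * b⁻¹) := by group
      have hlen : ((a :: L').length : ℝ≥0∞) = (L'.length : ℝ≥0∞) + 1 := by
        push_cast [List.length_cons]; ring
      calc ν ((a :: L').prod * ((b :: M').prod)⁻¹)
          = ν ((a * (L'.prod * M'.prod⁻¹) * a⁻¹) * (a * b⁻¹)) := by
            rw [List.prod_cons, List.prod_cons, key]
        _ ≤ ν (a * (L'.prod * M'.prod⁻¹) * a⁻¹) + ν (a * b⁻¹) := hν.mul _ _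
        _ = ν (L'.prod * M'.prod⁻¹) + ν (a * b⁻¹) := by rw [hν.conj]
        _ ≤ (L'.length : ℝ≥0∞) * δ + δ := add_le_add ih hab
        _ = ((a :: L').length : ℝ≥0∞) * δ := by rw [hlen, add_mul, one_mul]

lemma IsGNorm.isPC_shift {ν : G → ℝ≥0∞} (hν : IsGNorm ν) {C : ℝ≥0∞} {N : ℕ} {g g' w : G}
    (h : IsPC ν C N g w) {δ : ℝ≥0∞} (hd : ν (g * g'⁻¹) ≤ δ) :
    ∃ w', IsPC ν C N g' w' ∧ ν (w * w'⁻¹) ≤ (N : ℝ≥0∞) * δ := by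
  obtain ⟨L, hL, hf, rfl⟩ := h
  have main : ∀ L' : List G,
      (∀ f ∈ L', ∃ k, ν k ≤ C ∧ (f = k⁻¹ * g * k ∨ f = k⁻¹ * g⁻¹ * k)) →
      ∃ M : List G, M.length = L'.length ∧
        (∀ f ∈ M, ∃ k, ν k ≤ C ∧ (f = k⁻¹ * g' * k ∨ f = k⁻¹ * g'⁻¹ * k)) ∧
        List.Forall₂ (fun a b => ν (a * b⁻¹) ≤ δ) L' M := by
    intro L'
    induction L' with
    | nil => exact fun _ => ⟨[], rfl, by simp, List.Forall₂.nil⟩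
    | cons f T ih =>
        intro hf'
        obtain ⟨M, hM1, hM2, hM3⟩ := ih (fun x hx => hf' x (List.mem_cons_of_mem f hx))
        obtain ⟨k, hk, hcase⟩ := hf' f List.mem_cons_self
        rcases hcase with h | h
        · refine ⟨(k⁻¹ * g' * k) :: M, by simp [hM1], ?_, ?_⟩
          · intro f' hf''
            rcases List.mem_cons.1 hf'' with rfl | hx
            exacts [⟨k, hk, Or.inl rfl⟩, hM2 f' hx]
          · refine List.Forall₂.cons ?_ hM3
            have h2 : f * (k⁻¹ * g' * k)⁻¹ = k⁻¹ * (g * g'⁻¹) * k := by rw [h]; group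
            rw [h2, hν.conj']
            exact hd
        · refine ⟨(k⁻¹ * g'⁻¹ * k) :: M, by simp [hM1], ?_, ?_⟩
          · intro f' hf''
            rcases List.mem_cons.1 hf'' with rfl | hx
            exacts [⟨k, hk, Or.inr rfl⟩, hM2 f' hx]
          · refine List.Forall₂.cons ?_ hM3
            have h2 : f * (k⁻¹ * g'⁻¹ * k)⁻¹ = k⁻¹ * (g⁻¹ * g') * k := by rw [h]; group
            rw [h2, hν.conj', ← hν.dist_symm]
            exact hd
  obtain ⟨M, hM1, hM2, hM3⟩ := main L hf
  refine ⟨M.prod, ⟨M, by rw [hM1]; exact hL, hM2, rfl⟩, ?_⟩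
  calc ν (L.prod * M.prod⁻¹) ≤ (L.length : ℝ≥0∞) * δ := hν.prod_dist hM3
    _ ≤ (N : ℝ≥0∞) * δ := mul_le_mul_left (by exact_mod_cast hL) δ

end AuxNorm


namespace PMFamily

variable (𝒢 : PMFamily) (U : Ultrafilter ℕ)

lemma isGNorm (n : ℕ) : IsGNorm (𝒢.ν n) :=
  ⟨𝒢.norm_one n, 𝒢.norm_mul n, 𝒢.norm_inv n, fun a b => 𝒢.norm_conj n a b⟩

lemma mk_eq_mk_of_agree {g h : ∀ n, 𝒢.G n} (hgh : {n | g n = h n} ∈ U) :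
    (QuotientGroup.mk g : 𝒢.Q U) = QuotientGroup.mk h := by
  rw [QuotientGroup.eq]
  rw [PMFamily.mem_E]
  intro ε hε
  refine Filter.mem_of_superset hgh fun n hn => ?_
  simp only [Set.mem_setOf_eq] at hn ⊢
  have h1 : (g⁻¹ * h) n = 1 := by
    simp only [Pi.mul_apply, Pi.inv_apply, hn]
    group
  rw [h1, 𝒢.norm_one n]; exact hε

lemma exists_lb_of_ne_one {g : ∀ n, 𝒢.G n} (hg : (QuotientGroup.mk g : 𝒢.Q U) ≠ 1) :
    ∃ s : ℝ≥0∞, 0 < s ∧ s ≠ ⊤ ∧ {n | s ≤ 𝒢.ν n (g n)} ∈ U := by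
  rw [Ne, QuotientGroup.eq_one_iff, PMFamily.mem_E] at hg
  push_neg at hg
  obtain ⟨ε, hε, hεU⟩ := hg
  refine ⟨min ε 1, lt_min hε one_pos, ne_top_of_le_ne_top one_ne_top (min_le_right _ _), ?_⟩
  have h1 : {n | 𝒢.ν n (g n) < min ε 1} ∉ U := by
    intro hmem
    refine hεU (Filter.mem_of_superset hmem fun n hn => ?_)
    simp only [Set.mem_setOf_eq] at hn ⊢
    exact lt_of_lt_of_le hn (min_le_left _ _)
  have h2 := (Ultrafilter.compl_mem_iff_notMem).2 h1
  refine Filter.mem_of_superset h2 fun n hn => ?_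
  simp only [Set.mem_compl_iff, Set.mem_setOf_eq, not_lt] at hn
  exact hn

lemma up_mem (hU : (U : Filter ℕ) ≤ Filter.cofinite) (k : ℕ) : {m | k ≤ m} ∈ U := by
  apply hU
  rw [Filter.mem_cofinite]
  have h1 : {m : ℕ | k ≤ m}ᶜ = {m | m < k} := by ext m; simp [not_le]
  rw [h1]; exact Set.finite_lt_nat k

lemma exists_pc_of_mem_normalClosure {x y : ↥(𝒢.finSubgroup U)} (g : ∀ n, 𝒢.G n)
    (hg : (QuotientGroup.mk g : 𝒢.Q U) = ↑x)
    (hy : y ∈ Subgroup.normalClosure {x}) :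
    ∃ (N C : ℕ) (w : ∀ n, 𝒢.G n), (QuotientGroup.mk w : 𝒢.Q U) = ↑y ∧
      ∀ n, IsPC (𝒢.ν n) C N (g n) (w n) := by
  refine Subgroup.closure_induction ?_ ?_ ?_ ?_ hy
  · intro f hf
    rw [Group.mem_conjugatesOfSet_iff] at hf
    obtain ⟨c0, hc0, hconj⟩ := hf
    rw [Set.mem_singleton_iff] at hc0; subst hc0
    obtain ⟨c, hc⟩ := isConj_iff.1 hconj
    obtain ⟨ζ, hζ, Cz, hCz, hbound⟩ := c.2
    obtain ⟨Cn, hCn⟩ := ENNReal.exists_nat_gt hCz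
    refine ⟨1, Cn, fun n => ζ n * g n * (ζ n)⁻¹, ?_, ?_⟩
    · have h1 : (QuotientGroup.mk (fun n => ζ n * g n * (ζ n)⁻¹) : 𝒢.Q U)
          = QuotientGroup.mk ζ * QuotientGroup.mk g * (QuotientGroup.mk ζ)⁻¹ := by
        show (QuotientGroup.mk (ζ * g * ζ⁻¹) : 𝒢.Q U) = _
        simp
      rw [h1, hζ, hg, ← hc]
      simp
    · intro n
      refine ⟨[ζ n * g n * (ζ n)⁻¹], by simp, ?_, by simp⟩
      intro f' hf'
      simp only [List.mem_singleton] at hf'; subst hf'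
      refine ⟨(ζ n)⁻¹, ?_, Or.inl (by group)⟩
      rw [𝒢.norm_inv]
      exact (hbound n).trans hCn.le
  · exact ⟨0, 0, 1, by simp, fun n => isPC_one _ _ _ _⟩
  · rintro y₁ y₂ hy₁ hy₂ ⟨N₁, C₁, w₁, hw₁, hPC₁⟩ ⟨N₂, C₂, w₂, hw₂, hPC₂⟩
    refine ⟨N₁ + N₂, max C₁ C₂, w₁ * w₂, ?_, fun n => ?_⟩
    · have h1 : (QuotientGroup.mk (w₁ * w₂) : 𝒢.Q U)
          = QuotientGroup.mk w₁ * QuotientGroup.mk w₂ := by simp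
      rw [h1, hw₁, hw₂]; simp
    · exact ((hPC₁ n).mono (by exact_mod_cast Nat.le_max_left C₁ C₂) le_rfl).mul
        ((hPC₂ n).mono (by exact_mod_cast Nat.le_max_right C₁ C₂) le_rfl)
  · rintro y₁ hy₁ ⟨N₁, C₁, w₁, hw₁, hPC₁⟩
    refine ⟨N₁, C₁, w₁⁻¹, ?_, fun n => (hPC₁ n).inv⟩
    have h1 : (QuotientGroup.mk (w₁⁻¹) : 𝒢.Q U) = (QuotientGroup.mk w₁)⁻¹ := by simp
    rw [h1, hw₁]; simp

lemma absorb (𝒩 : Subgroup ↥(𝒢.finSubgroup U)) (h𝒩 : 𝒩.Normal)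
    {x : ↥(𝒢.finSubgroup U)} (hx : x ∈ 𝒩) (a : ∀ n, 𝒢.G n)
    (ha : (QuotientGroup.mk a : 𝒢.Q U) = ↑x) (C : ℝ≥0∞) (hC : C ≠ ⊤) :
    ∀ (N : ℕ) (y : ↥(𝒢.finSubgroup U)) (w : ∀ n, 𝒢.G n),
      (QuotientGroup.mk w : 𝒢.Q U) = ↑y →
      {n | IsPC (𝒢.ν n) C N (a n) (w n)} ∈ U → y ∈ 𝒩 := by
  have one_case : ∀ (y : ↥(𝒢.finSubgroup U)) (w : ∀ n, 𝒢.G n),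
      (QuotientGroup.mk w : 𝒢.Q U) = ↑y → {n | w n = 1} ∈ U → y ∈ 𝒩 := by
    intro y w hw h1
    have h2 : (QuotientGroup.mk w : 𝒢.Q U) = QuotientGroup.mk 1 :=
      𝒢.mk_eq_mk_of_agree U (by
        refine Filter.mem_of_superset h1 fun n hn => ?_
        simpa using hn)
    have hy1 : (y : 𝒢.Q U) = 1 := by
      rw [← hw, h2]; simp
    have hy2 : y = 1 := by
      exact_mod_cast hy1
    rw [hy2]; exact 𝒩.one_mem
  intro N
  induction N with
  | zero =>
      intro y w hw hA
      refine one_case y w hw (Filter.mem_of_superset hA fun n hn => ?_)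
      obtain ⟨L, hL, _, hw'⟩ := hn
      have hnil : L = [] := List.length_eq_zero_iff.mp (Nat.le_zero.mp hL)
      simp only [Set.mem_setOf_eq]
      rw [hw', hnil, List.prod_nil]
  | succ N ih =>
      intro y w hw hA
      classical
      have hsplit : {n | IsPC (𝒢.ν n) C (N+1) (a n) (w n)} ⊆ {n | w n = 1} ∪
          {n | ∃ k v, 𝒢.ν n k ≤ C ∧
            (w n = (k⁻¹ * a n * k) * v ∨ w n = (k⁻¹ * (a n)⁻¹ * k) * v) ∧
            IsPC (𝒢.ν n) C N (a n) v} := by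
        intro n hn
        rcases IsPC.cons_decomp hn with h | ⟨k, v, hk, hcase, hPC⟩
        · exact Or.inl h
        · exact Or.inr ⟨k, v, hk, hcase, hPC⟩
      rcases (Ultrafilter.union_mem_iff).1 (Filter.mem_of_superset hA hsplit) with hone | hdec
      · exact one_case y w hw hone
      set Dec : ℕ → Prop := fun n => ∃ k v, 𝒢.ν n k ≤ C ∧
        (w n = (k⁻¹ * a n * k) * v ∨ w n = (k⁻¹ * (a n)⁻¹ * k) * v) ∧
        IsPC (𝒢.ν n) C N (a n) v with hDecDef
      have hdec' : {n | Dec n} ∈ U := hdec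
      set kf : ∀ n, 𝒢.G n := fun n => if h : Dec n then h.choose else 1 with hkf
      set vf : ∀ n, 𝒢.G n := fun n => if h : Dec n then h.choose_spec.choose else 1 with hvf
      have hspec : ∀ n, Dec n → 𝒢.ν n (kf n) ≤ C ∧
          (w n = ((kf n)⁻¹ * a n * kf n) * vf n ∨ w n = ((kf n)⁻¹ * (a n)⁻¹ * kf n) * vf n) ∧
          IsPC (𝒢.ν n) C N (a n) (vf n) := by
        intro n hn
        have h1 := hn.choose_spec.choose_spec
        simp only [hkf, hvf, dif_pos hn]
        exact h1
      have hsub : {n | Dec n} ⊆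
          {n | Dec n ∧ w n = ((kf n)⁻¹ * a n * kf n) * vf n} ∪
          {n | Dec n ∧ w n = ((kf n)⁻¹ * (a n)⁻¹ * kf n) * vf n} := by
        intro n hn
        rcases (hspec n hn).2.1 with h | h
        exacts [Or.inl ⟨hn, h⟩, Or.inr ⟨hn, h⟩]
      have main : ∀ (x' : ↥(𝒢.finSubgroup U)) (a' : ∀ n, 𝒢.G n), x' ∈ 𝒩 →
          (QuotientGroup.mk a' : 𝒢.Q U) = ↑x' →
          {n | Dec n ∧ w n = ((kf n)⁻¹ * a' n * kf n) * vf n} ∈ U → y ∈ 𝒩 := by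
        intro x' a' hx' ha' hB
        set ζ : ∀ n, 𝒢.G n := fun n => if h : Dec n then (kf n)⁻¹ else 1 with hζ
        have hζb : ∀ n, 𝒢.ν n (ζ n) ≤ C := by
          intro n; by_cases h : Dec n
          · simp only [hζ, dif_pos h]
            rw [𝒢.norm_inv]; exact (hspec n h).1
          · simp only [hζ, dif_neg h]
            rw [𝒢.norm_one]; exact zero_le
        set Z : ↥(𝒢.finSubgroup U) := ⟨QuotientGroup.mk ζ, ζ, rfl, C, hC, hζb⟩ with hZ
        have hF : Z * x' * Z⁻¹ ∈ 𝒩 := h𝒩.conj_mem x' hx' Z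
        have hy' : (Z * x' * Z⁻¹)⁻¹ * y ∈ 𝒩 := by
          refine ih ((Z * x' * Z⁻¹)⁻¹ * y) (fun n => (ζ n * a' n * (ζ n)⁻¹)⁻¹ * w n) ?_ ?_
          · have h1 : (QuotientGroup.mk (fun n => (ζ n * a' n * (ζ n)⁻¹)⁻¹ * w n) : 𝒢.Q U)
                = (QuotientGroup.mk ζ * QuotientGroup.mk a' * (QuotientGroup.mk ζ)⁻¹)⁻¹ *
                  QuotientGroup.mk w := by
              show (QuotientGroup.mk ((ζ * a' * ζ⁻¹)⁻¹ * w) : 𝒢.Q U) = _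
              simp
            rw [h1, ha', hw]
            have hZc : (QuotientGroup.mk ζ : 𝒢.Q U) = ↑Z := rfl
            rw [hZc]
            push_cast
            rfl
          · refine Filter.mem_of_superset hB fun n hn => ?_
            obtain ⟨hdn, hwn⟩ := hn
            have hζn : ζ n = (kf n)⁻¹ := by simp only [hζ, dif_pos hdn]
            simp only [Set.mem_setOf_eq]
            have h2 : (ζ n * a' n * (ζ n)⁻¹)⁻¹ * w n = vf n := by
              rw [hζn, hwn]; group
            rw [h2]
            exact (hspec n hdn).2.2
        have h3 := 𝒩.mul_mem hF hy'
        rwa [mul_inv_cancel_left] at h3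
      rcases (Ultrafilter.union_mem_iff).1 (Filter.mem_of_superset hdec' hsub) with hB | hB
      · exact main x a hx ha hB
      · refine main x⁻¹ a⁻¹ (𝒩.inv_mem hx) ?_ ?_
        · have h1 : (QuotientGroup.mk (a⁻¹ : ∀ n, 𝒢.G n) : 𝒢.Q U)
              = (QuotientGroup.mk a)⁻¹ := by simp
          rw [h1, ha]; simp
        · refine Filter.mem_of_superset hB fun n hn => ?_
          obtain ⟨hdn, hwn⟩ := hn
          exact ⟨hdn, by simpa using hwn⟩

end PMFamily


section EHelpers

lemma ofReal_one_div_succ (j : ℕ) :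
    ENNReal.ofReal (1 / ((j : ℝ) + 1)) = ((j : ℝ≥0∞) + 1)⁻¹ := by
  rw [one_div, ENNReal.ofReal_inv_of_pos (by positivity)]
  congr 1
  rw [ENNReal.ofReal_add (Nat.cast_nonneg j) zero_le_one, ENNReal.ofReal_natCast,
    ENNReal.ofReal_one]

lemma ofReal_one_div_succ_le_one (j : ℕ) :
    ENNReal.ofReal (1 / ((j : ℝ) + 1)) ≤ 1 := by
  rw [ofReal_one_div_succ]
  exact ENNReal.inv_le_one.mpr (by simp)

lemma ofReal_one_div_succ_anti {j k : ℕ} (h : j ≤ k) :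
    ENNReal.ofReal (1 / ((k : ℝ) + 1)) ≤ ENNReal.ofReal (1 / ((j : ℝ) + 1)) := by
  rw [ofReal_one_div_succ, ofReal_one_div_succ]
  exact ENNReal.inv_le_inv.mpr (by exact_mod_cast add_le_add_left (Nat.cast_le.mpr h) 1)

lemma ediv_le_self {a b : ℝ≥0∞} (hb : 1 ≤ b) : a / b ≤ a := by
  calc a / b = a * b⁻¹ := div_eq_mul_inv a b
    _ ≤ a * 1 := mul_le_mul_right (ENNReal.inv_le_one.mpr hb) a
    _ = a := mul_one a

lemma exists_one_div_succ_lt {δ : ℝ≥0∞} (hδ : δ ≠ 0) :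
    ∃ k : ℕ, ∀ j : ℕ, k ≤ j → ENNReal.ofReal (1 / ((j : ℝ) + 1)) < δ := by
  obtain ⟨n, hn⟩ := ENNReal.exists_inv_nat_lt hδ
  refine ⟨n, fun j hj => ?_⟩
  rw [ofReal_one_div_succ]
  refine lt_of_le_of_lt ?_ hn
  exact ENNReal.inv_le_inv.mpr (by exact_mod_cast (Nat.cast_le.mpr hj).trans (le_add_of_nonneg_right zero_le_one))

end EHelpers

section Core

/-- Transfer of uniform bounded approximate normal generation from `𝒢` to sequences in `H`. -/
lemma core_approx (𝒢 : PMFamily) (U : Ultrafilter ℕ) (hU : (U : Filter ℕ) ≤ Filter.cofinite)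
    {H : Type} [Group H] (νH : H → ℝ≥0∞) (hν : IsGNorm νH)
    (hsimple : IsSimpleGroup ↥(𝒢.finSubgroup U))
    (happrox : ∀ t ε : ℝ, 0 < t → 0 < ε → ∀ h₁ h₂ : H,
      νH h₁ ≤ ENNReal.ofReal t → νH h₂ ≤ ENNReal.ofReal t →
      {n | ∃ (g₁ g₂ : 𝒢.G n) (φ : 𝒢.G n →* H), (∀ g : 𝒢.G n, νH (φ g) = 𝒢.ν n g) ∧
        νH (φ g₁ * h₁⁻¹) < ENNReal.ofReal ε ∧ νH (φ g₂ * h₂⁻¹) < ENNReal.ofReal ε} ∈ U)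
    (a b : ℕ → H) (S : ℝ≥0∞) (hS : S ≠ ⊤) (hSa : ∀ n, νH (a n) ≤ S) (hSb : ∀ n, νH (b n) ≤ S)
    (s : ℝ≥0∞) (hs : 0 < s) (hsa : {n | s ≤ νH (a n)} ∈ U) :
    ∃ N C : ℕ, ∀ γ : ℝ≥0∞, 0 < γ →
      {n | ∃ w, IsPC νH (C : ℝ≥0∞) N (a n) w ∧ νH (b n * w⁻¹) < γ} ∈ U := by
  by_contra hcon
  push_neg at hcon
  classical
  have hγ : ∀ N C : ℕ, ∃ γ : ℝ≥0∞, 0 < γ ∧ γ ≤ 1 ∧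
      {n | ∀ w, IsPC νH (C : ℝ≥0∞) N (a n) w → γ ≤ νH (b n * w⁻¹)} ∈ U := by
    intro N C
    obtain ⟨γ, hγ0, hγU⟩ := hcon N C
    refine ⟨min γ 1, lt_min hγ0 one_pos, min_le_right _ _, ?_⟩
    have h1 : {n | ∃ w, IsPC νH (C : ℝ≥0∞) N (a n) w ∧ νH (b n * w⁻¹) < min γ 1} ∉ U := by
      intro hmem
      refine hγU (Filter.mem_of_superset hmem fun n hn => ?_)
      obtain ⟨w, hw1, hw2⟩ := hn
      exact ⟨w, hw1, lt_of_lt_of_le hw2 (min_le_left _ _)⟩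
    have h2 := (Ultrafilter.compl_mem_iff_notMem).2 h1
    refine Filter.mem_of_superset h2 fun n hn => ?_
    simp only [Set.mem_compl_iff, Set.mem_setOf_eq, not_exists, not_and, not_lt] at hn
    exact hn
  choose γf hγ0 hγ1 hγU using hγ
  set B : ℕ → Set ℕ := fun j =>
    {n | ∀ w, IsPC νH (j : ℝ≥0∞) j (a n) w → γf j j ≤ νH (b n * w⁻¹)} ∩
      {n | s ≤ νH (a n)} with hBdef
  have hB : ∀ j, B j ∈ U := fun j => Filter.inter_mem (hγU j j) hsa
  set Cc : ℕ → Set ℕ := fun k => Nat.rec (B 0) (fun k ih => ih ∩ B (k + 1)) k with hCcdef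
  have hCc : ∀ k, Cc k ∈ U := by
    intro k; induction k with
    | zero => exact hB 0
    | succ k ih => exact Filter.inter_mem ih (hB (k + 1))
  have hCcB : ∀ j k, j ≤ k → Cc k ⊆ B j := by
    intro j k hjk
    induction k with
    | zero => rw [Nat.le_zero.mp hjk]; exact subset_rfl
    | succ k ih =>
        rcases eq_or_lt_of_le hjk with rfl | hlt
        · exact Set.inter_subset_right
        · exact Set.inter_subset_left.trans (ih (Nat.lt_succ_iff.mp hlt))
  set nstar : ℕ → ℕ := fun k => (Filter.nonempty_of_mem (hCc k)).choose with hnstardef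
  have hnstar : ∀ k, nstar k ∈ Cc k := fun k => (Filter.nonempty_of_mem (hCc k)).choose_spec
  set t : ℝ := S.toReal + 1 with ht
  have htpos : 0 < t := by positivity
  have hSt : S ≤ ENNReal.ofReal t := by
    rw [ht]
    calc S = ENNReal.ofReal S.toReal := (ENNReal.ofReal_toReal hS).symm
      _ ≤ _ := ENNReal.ofReal_le_ofReal (by linarith)
  set Ap : ℕ → ℕ → Prop := fun k m =>
    ∃ (g₁ g₂ : 𝒢.G m) (φ : 𝒢.G m →* H), (∀ g : 𝒢.G m, νH (φ g) = 𝒢.ν m g) ∧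
      νH (φ g₁ * (a (nstar k))⁻¹) < ENNReal.ofReal (1 / ((k : ℝ) + 1)) ∧
      νH (φ g₂ * (b (nstar k))⁻¹) < ENNReal.ofReal (1 / ((k : ℝ) + 1)) with hApdef
  have hA : ∀ k, {m | Ap k m} ∈ U := fun k =>
    happrox t (1 / ((k : ℝ) + 1)) htpos (by positivity) _ _
      ((hSa _).trans hSt) ((hSb _).trans hSt)
  set T : ℕ → Set ℕ := fun k => Nat.rec {m | Ap 0 m} (fun k ih => ih ∩ {m | Ap (k + 1) m}) k
    with hTdef
  have hT : ∀ k, T k ∈ U := by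
    intro k; induction k with
    | zero => exact hA 0
    | succ k ih => exact Filter.inter_mem ih (hA (k + 1))
  have hTA : ∀ j k, j ≤ k → T k ⊆ {m | Ap j m} := by
    intro j k hjk
    induction k with
    | zero => rw [Nat.le_zero.mp hjk]; exact subset_rfl
    | succ k ih =>
        rcases eq_or_lt_of_le hjk with rfl | hlt
        · exact Set.inter_subset_right
        · exact Set.inter_subset_left.trans (ih (Nat.lt_succ_iff.mp hlt))
  set κ : ℕ → ℕ := fun m => @Nat.findGreatest (fun j => m ∈ T j) (Classical.decPred _) m
    with hκdef
  have hκ : ∀ j, {m | j ≤ κ m ∧ m ∈ T (κ m)} ∈ U := by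
    intro j
    refine Filter.mem_of_superset (Filter.inter_mem (hT j) (PMFamily.up_mem U hU j))
      fun m hm => ?_
    obtain ⟨hm1, hm2⟩ := hm
    exact ⟨Nat.le_findGreatest hm2 hm1,
      Nat.findGreatest_spec (m := j) (P := fun j => m ∈ T j) hm2 hm1⟩
  set dat : ∀ m, 𝒢.G m × 𝒢.G m × (𝒢.G m →* H) := fun m =>
    if h : Ap (κ m) m then ⟨h.choose, h.choose_spec.choose, h.choose_spec.choose_spec.choose⟩
    else ⟨1, 1, 1⟩ with hdatdef
  set gs : ∀ m, 𝒢.G m := fun m => (dat m).1 with hgsdef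
  set hseq : ∀ m, 𝒢.G m := fun m => (dat m).2.1 with hhseqdef
  set φs : ∀ m, 𝒢.G m →* H := fun m => (dat m).2.2 with hφsdef
  have hdat : ∀ m, Ap (κ m) m →
      (∀ g : 𝒢.G m, νH (φs m g) = 𝒢.ν m g) ∧
      νH (φs m (gs m) * (a (nstar (κ m)))⁻¹) < ENNReal.ofReal (1 / ((κ m : ℝ) + 1)) ∧
      νH (φs m (hseq m) * (b (nstar (κ m)))⁻¹) < ENNReal.ofReal (1 / ((κ m : ℝ) + 1)) := by
    intro m h
    have h1 := h.choose_spec.choose_spec.choose_spec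
    simp only [hgsdef, hhseqdef, hφsdef, hdatdef, dif_pos h]
    exact h1
  have hgb : ∀ m, 𝒢.ν m (gs m) ≤ S + 1 := by
    intro m
    by_cases h : Ap (κ m) m
    · obtain ⟨hiso, he1, _⟩ := hdat m h
      rw [← hiso]
      calc νH (φs m (gs m))
          = νH (φs m (gs m) * (a (nstar (κ m)))⁻¹ * a (nstar (κ m))) := by
            rw [inv_mul_cancel_right]
        _ ≤ νH (φs m (gs m) * (a (nstar (κ m)))⁻¹) + νH (a (nstar (κ m))) := hν.mul _ _
        _ ≤ 1 + S := add_le_add (he1.le.trans (ofReal_one_div_succ_le_one _)) (hSa _)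
        _ = S + 1 := add_comm _ _
    · simp only [hgsdef, hdatdef, dif_neg h]
      rw [𝒢.norm_one]; exact zero_le
  have hhb : ∀ m, 𝒢.ν m (hseq m) ≤ S + 1 := by
    intro m
    by_cases h : Ap (κ m) m
    · obtain ⟨hiso, _, he2⟩ := hdat m h
      rw [← hiso]
      calc νH (φs m (hseq m))
          = νH (φs m (hseq m) * (b (nstar (κ m)))⁻¹ * b (nstar (κ m))) := by
            rw [inv_mul_cancel_right]
        _ ≤ νH (φs m (hseq m) * (b (nstar (κ m)))⁻¹) + νH (b (nstar (κ m))) := hν.mul _ _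
        _ ≤ 1 + S := add_le_add (he2.le.trans (ofReal_one_div_succ_le_one _)) (hSb _)
        _ = S + 1 := add_comm _ _
    · simp only [hhseqdef, hdatdef, dif_neg h]
      rw [𝒢.norm_one]; exact zero_le
  have hS1 : S + 1 ≠ ⊤ := by
    simp [hS]
  set X : ↥(𝒢.finSubgroup U) := ⟨QuotientGroup.mk gs, gs, rfl, S + 1, hS1, hgb⟩ with hXdef
  set Y : ↥(𝒢.finSubgroup U) := ⟨QuotientGroup.mk hseq, hseq, rfl, S + 1, hS1, hhb⟩ with hYdef
  have hXne : X ≠ 1 := by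
    intro hX1
    have hmk : (QuotientGroup.mk gs : 𝒢.Q U) = 1 := by
      have h1 : (X : 𝒢.Q U) = 1 := by rw [hX1]; rfl
      exact h1
    rw [QuotientGroup.eq_one_iff, PMFamily.mem_E] at hmk
    have hhalf : (0 : ℝ≥0∞) < s / 2 := ENNReal.half_pos hs.ne'
    have hsmall := hmk (s / 2) hhalf
    obtain ⟨k₁, hk₁⟩ := exists_one_div_succ_lt hhalf.ne'
    obtain ⟨m, hm1, hm2, hm3⟩ := Filter.nonempty_of_mem (Filter.inter_mem hsmall (hκ k₁))
    have hap : Ap (κ m) m := hTA (κ m) (κ m) le_rfl hm3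
    obtain ⟨hiso, he1, _⟩ := hdat m hap
    have hlow : s ≤ νH (a (nstar (κ m))) := (hCcB 0 (κ m) (Nat.zero_le _) (hnstar _)).2
    have hek : ENNReal.ofReal (1 / ((κ m : ℝ) + 1)) < s / 2 := hk₁ _ hm2
    have h2 : νH (a (nstar (κ m))) ≤
        νH (φs m (gs m) * (a (nstar (κ m)))⁻¹) + νH (φs m (gs m)) := by
      calc νH (a (nstar (κ m)))
          = νH ((φs m (gs m) * (a (nstar (κ m)))⁻¹)⁻¹ * (φs m (gs m))) := by
            congr 1; group
        _ ≤ νH ((φs m (gs m) * (a (nstar (κ m)))⁻¹)⁻¹) + νH (φs m (gs m)) := hν.mul _ _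
        _ = _ := by rw [hν.inv]
    have h3 : νH (φs m (gs m)) = 𝒢.ν m (gs m) := hiso _
    have h4 : s < s / 2 + s / 2 :=
      lt_of_le_of_lt (hlow.trans h2) (ENNReal.add_lt_add (lt_trans he1 hek) (h3 ▸ hm1))
    rw [ENNReal.add_halves] at h4
    exact lt_irrefl s h4
  have hclosure : Subgroup.normalClosure {X} = ⊤ := by
    rcases hsimple.eq_bot_or_eq_top_of_normal (Subgroup.normalClosure {X})
        Subgroup.normalClosure_normal with h | h
    · exfalso
      have hXmem : X ∈ Subgroup.normalClosure {X} :=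
        Subgroup.subset_normalClosure (Set.mem_singleton X)
      rw [h, Subgroup.mem_bot] at hXmem
      exact hXne hXmem
    · exact h
  have hYmem : Y ∈ Subgroup.normalClosure {X} := by rw [hclosure]; trivial
  obtain ⟨N₀, C₀, w, hwmk, hwPC⟩ := 𝒢.exists_pc_of_mem_normalClosure U gs rfl hYmem
  set j₀ : ℕ := max N₀ C₀ with hj₀
  set γ' : ℝ≥0∞ := γf j₀ j₀ with hγ'
  have hγ'0 : 0 < γ' := hγ0 j₀ j₀
  have hγ'1 : γ' ≤ 1 := hγ1 j₀ j₀
  have hγ't : γ' ≠ ⊤ := ne_top_of_le_ne_top one_ne_top hγ'1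
  set η : ℝ≥0∞ := γ' / 4 with hη
  have hη0 : η ≠ 0 := by
    rw [hη]
    simp [ENNReal.div_eq_zero_iff, hγ'0.ne']
  have hηt : η ≠ ⊤ := ne_top_of_le_ne_top hγ't (ediv_le_self (by norm_num))
  have hbw : {m | 𝒢.ν m (hseq m * (w m)⁻¹) < η} ∈ U := by
    have h0 : (QuotientGroup.mk hseq : 𝒢.Q U) = QuotientGroup.mk w := hwmk.symm
    rw [QuotientGroup.eq, PMFamily.mem_E] at h0
    have h5 := h0 η (pos_iff_ne_zero.mpr hη0)
    refine Filter.mem_of_superset h5 fun m hm => ?_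
    simp only [Set.mem_setOf_eq, Pi.mul_apply, Pi.inv_apply] at hm ⊢
    rw [(𝒢.isGNorm m).dist_symm]
    exact hm
  have hden0 : η / ((N₀ : ℝ≥0∞) + 1) ≠ 0 := by
    simp [ENNReal.div_eq_zero_iff, hη0]
  obtain ⟨k₂, hk₂⟩ := exists_one_div_succ_lt hden0
  obtain ⟨m, ⟨hm2, hm3⟩, hm1⟩ :=
    Filter.nonempty_of_mem (Filter.inter_mem (hκ (max j₀ k₂)) hbw)
  have hap : Ap (κ m) m := hTA (κ m) (κ m) le_rfl hm3
  obtain ⟨hiso, he1, he2⟩ := hdat m hap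
  have hj₀κ : j₀ ≤ κ m := le_trans (le_max_left _ _) hm2
  have hk₂κ : k₂ ≤ κ m := le_trans (le_max_right _ _) hm2
  set n' : ℕ := nstar (κ m) with hn'
  set e : ℝ≥0∞ := ENNReal.ofReal (1 / ((κ m : ℝ) + 1)) with he
  have hee : e < η / ((N₀ : ℝ≥0∞) + 1) := hk₂ _ hk₂κ
  have heη : e ≤ η := hee.le.trans (ediv_le_self (by simp))
  -- push the product of conjugates through φ and shift the base point to a n'
  have hPCH : IsPC νH (C₀ : ℝ≥0∞) N₀ (φs m (gs m)) (φs m (w m)) :=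
    IsPC.map (φs m) hiso (hwPC m)
  obtain ⟨w', hw'PC, hw'd⟩ := hν.isPC_shift hPCH he1.le
  -- the three error terms
  have p1 : νH (b n' * (φs m (hseq m))⁻¹) ≤ η := by
    rw [hν.dist_swap]
    exact he2.le.trans heη
  have p2 : νH (φs m (hseq m) * (φs m (w m))⁻¹) ≤ η := by
    have hmap : φs m (hseq m) * (φs m (w m))⁻¹ = φs m (hseq m * (w m)⁻¹) := by
      rw [map_mul, map_inv]
    rw [hmap, hiso]
    exact hm1.le
  have p3 : νH (φs m (w m) * w'⁻¹) ≤ η := by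
    refine hw'd.trans ?_
    calc (N₀ : ℝ≥0∞) * e ≤ ((N₀ : ℝ≥0∞) + 1) * (η / ((N₀ : ℝ≥0∞) + 1)) :=
          mul_le_mul (le_add_of_nonneg_right zero_le_one) hee.le zero_le zero_le
      _ = η := ENNReal.mul_div_cancel (by simp) (by simp)
  have htotal : νH (b n' * w'⁻¹) ≤ η + η + η := by
    calc νH (b n' * w'⁻¹)
        ≤ νH (b n' * (φs m (hseq m))⁻¹) + νH (φs m (hseq m) * w'⁻¹) := hν.dist_tri _ _ _
      _ ≤ νH (b n' * (φs m (hseq m))⁻¹) +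
          (νH (φs m (hseq m) * (φs m (w m))⁻¹) + νH (φs m (w m) * w'⁻¹)) :=
            add_le_add_right (hν.dist_tri _ _ _) _
      _ ≤ η + (η + η) := add_le_add p1 (add_le_add p2 p3)
      _ = η + η + η := by ring
  have hbad : γf j₀ j₀ ≤ νH (b n' * w'⁻¹) := by
    have hmem := (hCcB j₀ (κ m) hj₀κ (hnstar (κ m))).1
    refine hmem w' (hw'PC.mono ?_ (le_max_left _ _))
    exact_mod_cast Nat.cast_le.mpr (le_max_right N₀ C₀)
  have hlast : γ' < γ' := by
    calc γ' ≤ η + η + η := le_trans hbad htotal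
      _ < η + η + η + η := ENNReal.lt_add_right (by
          simp [ENNReal.add_eq_top, hηt]) hη0
      _ = 4 * η := by ring
      _ = γ' := by
        rw [hη]
        exact ENNReal.mul_div_cancel (by norm_num) (by norm_num)
  exact lt_irrefl _ hlast

end Core


/-- simplicity via approximation. If the metric ultraproduct
`𝒢*_met,fin` is simple and the metric group `(H,νH)` is approximated by the family `𝒢`
in the sense below, then the finitary metric ultrapower of `H` is simple as well
(both families are assumed to satisfy Assumption (A)). -/
theorem statement11 (𝒢 : PMFamily)
    (hmetric : ∀ n (g : 𝒢.G n), 𝒢.ν n g = 0 ↔ g = 1)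
    (H : Type) [Group H] (νH : H → ℝ≥0∞)
    (h1 : νH 1 = 0) (hm : ∀ g h : H, νH (g * h) ≤ νH g + νH h)
    (hi : ∀ g : H, νH g⁻¹ = νH g) (hc : ∀ g h : H, νH (h * g * h⁻¹) = νH g)
    (hz : ∀ g : H, νH g = 0 ↔ g = 1)
    (U : Ultrafilter ℕ) (hU : (U : Filter ℕ) ≤ Filter.cofinite)
    -- Assumption (A) for 𝒢
    (F : ℝ≥0∞ → ℝ≥0∞) (hFmono : Monotone F) (hFpos : ∀ x, 0 < F x)
    (hA : ∀ n (g : 𝒢.G n), {x | IsConj g x} =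
      {x | ∃ h : 𝒢.G n, 𝒢.ν n h < F (𝒢.ν n g) ∧ x = h⁻¹ * g * h})
    -- Assumption (A) for the constant family on H
    (F' : ℝ≥0∞ → ℝ≥0∞) (hF'mono : Monotone F') (hF'pos : ∀ x, 0 < F' x)
    (hAH : ∀ g : H, {x | IsConj g x} =
      {x | ∃ h : H, νH h < F' (νH g) ∧ x = h⁻¹ * g * h})
    -- 𝒢*_met,fin is simple
    (hsimple : IsSimpleGroup ↥(𝒢.finSubgroup U))
    -- the approximation property
    (happrox : ∀ t ε : ℝ, 0 < t → 0 < ε → ∀ h₁ h₂ : H,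
      νH h₁ ≤ ENNReal.ofReal t → νH h₂ ≤ ENNReal.ofReal t →
      {n | ∃ (g₁ g₂ : 𝒢.G n) (φ : 𝒢.G n →* H), (∀ g : 𝒢.G n, νH (φ g) = 𝒢.ν n g) ∧
        νH (φ g₁ * h₁⁻¹) < ENNReal.ofReal ε ∧ νH (φ g₂ * h₂⁻¹) < ENNReal.ofReal ε} ∈ U) :
    let ℋ : PMFamily :=
      ⟨fun _ => H, fun _ => inferInstance, fun _ => νH,
        fun _ => h1, fun _ => hm, fun _ => hi, fun _ => hc⟩
    IsSimpleGroup ↥(ℋ.finSubgroup U) := by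
  intro ℋ
  classical
  have hνH : IsGNorm νH := ⟨h1, hm, hi, hc⟩
  -- Nontriviality of the finitary ultrapower of H
  have hnontriv : Nontrivial ↥(ℋ.finSubgroup U) := by
    obtain ⟨X, hXne⟩ := exists_ne (1 : ↥(𝒢.finSubgroup U))
    obtain ⟨g, hg, Sg, hSg, hgb⟩ := X.2
    have hXne' : (QuotientGroup.mk g : 𝒢.Q U) ≠ 1 := by
      rw [hg]; intro hcoe; exact hXne (by exact_mod_cast hcoe)
    obtain ⟨s₀, hs₀, hs₀t, hs₀U⟩ := 𝒢.exists_lb_of_ne_one U hXne'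
    set Ap0 : ℕ → Prop := fun m => ∃ (g₁ g₂ : 𝒢.G m) (φ : 𝒢.G m →* H),
      (∀ q : 𝒢.G m, νH (φ q) = 𝒢.ν m q) ∧
      νH (φ g₁ * (1 : H)⁻¹) < ENNReal.ofReal 1 ∧
      νH (φ g₂ * (1 : H)⁻¹) < ENNReal.ofReal 1 with hAp0def
    have hA0 : {m | Ap0 m} ∈ U :=
      happrox 1 1 one_pos one_pos 1 1 (by simp [h1]) (by simp [h1])
    set φ0 : ∀ m, 𝒢.G m →* H := fun m =>
      if h : Ap0 m then h.choose_spec.choose_spec.choose else 1 with hφ0def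
    have hφ0iso : ∀ m, Ap0 m → ∀ q, νH (φ0 m q) = 𝒢.ν m q := by
      intro m h
      have h2 := h.choose_spec.choose_spec.choose_spec.1
      simp only [hφ0def, dif_pos h]
      exact h2
    set bseq : ℕ → H := fun m => φ0 m (g m) with hbseqdef
    have hbb : ∀ m, νH (bseq m) ≤ Sg := by
      intro m; by_cases h : Ap0 m
      · simp only [hbseqdef]
        rw [hφ0iso m h]; exact hgb m
      · simp only [hbseqdef, hφ0def, dif_neg h]
        rw [MonoidHom.one_apply, h1]; exact zero_le
    set Yb : ↥(ℋ.finSubgroup U) := ⟨QuotientGroup.mk bseq, bseq, rfl, Sg, hSg, hbb⟩ with hYbdef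
    have hYbne : Yb ≠ 1 := by
      intro hY1
      have hmk : (QuotientGroup.mk bseq : ℋ.Q U) = 1 := by
        have h2 : (Yb : ℋ.Q U) = 1 := by rw [hY1]; rfl
        exact h2
      rw [QuotientGroup.eq_one_iff, PMFamily.mem_E] at hmk
      have hsmall := hmk s₀ hs₀
      obtain ⟨m, hm1, hm2, hm3⟩ :=
        Filter.nonempty_of_mem (Filter.inter_mem hsmall (Filter.inter_mem hs₀U hA0))
      have hlt : 𝒢.ν m (g m) < s₀ := by
        have hb' : νH (bseq m) < s₀ := hm1
        simp only [hbseqdef] at hb'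
        rwa [hφ0iso m hm3 (g m)] at hb'
      exact absurd hm2 (not_le.mpr hlt)
    exact nontrivial_of_ne Yb 1 hYbne
  refine @IsSimpleGroup.mk _ _ hnontriv ?_
  intro 𝒩 h𝒩
  by_cases hbot : 𝒩 = ⊥
  · exact Or.inl hbot
  right
  obtain ⟨x, hx𝒩, hxne⟩ : ∃ x, x ∈ 𝒩 ∧ x ≠ 1 := by
    by_contra hno
    push_neg at hno
    exact hbot ((Subgroup.eq_bot_iff_forall 𝒩).mpr hno)
  rw [Subgroup.eq_top_iff']
  intro y
  obtain ⟨a, ha, Sa, hSat, hab⟩ := x.2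
  obtain ⟨b, hb, Sb, hSbt, hbb⟩ := y.2
  have hxne' : (QuotientGroup.mk a : ℋ.Q U) ≠ 1 := by
    rw [ha]; intro hcoe; exact hxne (by exact_mod_cast hcoe)
  obtain ⟨s, hs, hst, hsU⟩ := ℋ.exists_lb_of_ne_one U hxne'
  obtain ⟨N, C, hNC⟩ := core_approx 𝒢 U hU νH hνH hsimple happrox a b (Sa + Sb)
    (ENNReal.add_ne_top.mpr ⟨hSat, hSbt⟩)
    (fun n => (hab n).trans le_self_add)
    (fun n => (hbb n).trans le_add_self)
    s hs hsU
  set Sg2 : ℕ → Set ℕ := fun j => {n | ∃ w, IsPC νH (C : ℝ≥0∞) N (a n) w ∧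
    νH (b n * w⁻¹) < ENNReal.ofReal (1 / ((j : ℝ) + 1))} with hSg2def
  have hSg2U : ∀ j, Sg2 j ∈ U := fun j => hNC _ (by
    rw [ofReal_one_div_succ]
    exact ENNReal.inv_pos.mpr (by simp))
  set T2 : ℕ → Set ℕ := fun k => Nat.rec (Sg2 0) (fun k ih => ih ∩ Sg2 (k + 1)) k with hT2def
  have hT2U : ∀ k, T2 k ∈ U := by
    intro k; induction k with
    | zero => exact hSg2U 0
    | succ k ih => exact Filter.inter_mem ih (hSg2U (k + 1))
  have hT2S : ∀ j k, j ≤ k → T2 k ⊆ Sg2 j := by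
    intro j k hjk
    induction k with
    | zero => rw [Nat.le_zero.mp hjk]; exact subset_rfl
    | succ k ih =>
        rcases eq_or_lt_of_le hjk with rfl | hlt
        · exact Set.inter_subset_right
        · exact Set.inter_subset_left.trans (ih (Nat.lt_succ_iff.mp hlt))
  set κ2 : ℕ → ℕ := fun n => @Nat.findGreatest (fun j => n ∈ T2 j) (Classical.decPred _) n
    with hκ2def
  have hκ2 : ∀ j, {n | j ≤ κ2 n ∧ n ∈ T2 (κ2 n)} ∈ U := by
    intro j
    refine Filter.mem_of_superset (Filter.inter_mem (hT2U j) (PMFamily.up_mem U hU j))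
      fun n hn => ?_
    obtain ⟨hn1, hn2⟩ := hn
    exact ⟨Nat.le_findGreatest hn2 hn1,
      Nat.findGreatest_spec (m := j) (P := fun j => n ∈ T2 j) hn2 hn1⟩
  set P2 : ℕ → Prop := fun n => ∃ w, IsPC νH (C : ℝ≥0∞) N (a n) w ∧
    νH (b n * w⁻¹) < ENNReal.ofReal (1 / ((κ2 n : ℝ) + 1)) with hP2def
  set wseq : ℕ → H := fun n => if h : P2 n then h.choose else 1 with hwseqdef
  have hwPC : ∀ n, IsPC νH (C : ℝ≥0∞) N (a n) (wseq n) := by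
    intro n; by_cases h : P2 n
    · simp only [hwseqdef, dif_pos h]; exact h.choose_spec.1
    · simp only [hwseqdef, dif_neg h]; exact isPC_one _ _ _ _
  have hmkeq : (QuotientGroup.mk b : ℋ.Q U) = QuotientGroup.mk wseq := by
    rw [QuotientGroup.eq, PMFamily.mem_E]
    intro ε hε
    obtain ⟨j, hj⟩ := exists_one_div_succ_lt hε.ne'
    refine Filter.mem_of_superset (hκ2 j) fun n hn => ?_
    obtain ⟨hn1, hn2⟩ := hn
    have hp : P2 n := hT2S (κ2 n) (κ2 n) le_rfl hn2
    have hval : wseq n = hp.choose := by simp only [hwseqdef, dif_pos hp]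
    have hww := hp.choose_spec.2
    show νH ((b n)⁻¹ * wseq n) < ε
    rw [← hνH.dist_symm, hval]
    exact hww.trans (hj _ hn1)
  exact ℋ.absorb U 𝒩 h𝒩 hx𝒩 a ha (C : ℝ≥0∞) (by simp) N y wseq
    (hmkeq.symm.trans hb) (Filter.univ_mem' hwPC)
end

section
/- Let (G_n)_{n∈ℕ} be a family of nontrivial groups with the (⋆)-property and 𝒰 a nonprincipal ultrafilter on ℕ. Then Z_𝒰 is a normal subgroup of ∏_{n∈ℕ} G_n, and the quotient group (∏_{n∈ℕ} G_n)/Z_𝒰 is a nontrivial boundedly simple group. -/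
open Filter Set Pointwise ENNReal

/-- `Ng g = min {n : C_n(g,G) = G}` (and `⊤` if there is no such `n`). -/
noncomputable def Ng {H : Type*} [Group H] (g : H) : ℕ∞ :=
  sInf {x : ℕ∞ | ∃ m : ℕ, x = m ∧ CN m g = Set.univ}

/-- The `(⋆)`-property for a family of groups. -/
def StarProp (G : ℕ → Type) [∀ n, Group (G n)] : Prop :=
  (∃ N : ℕ, ∀ n, ∃ g : G n, CN N g = Set.univ) ∧
  (∀ k : ℕ, ∃ l : ℕ, ∀ n (g h : G n),
    (l : ℕ∞) ≤ Ng g → (l : ℕ∞) ≤ Ng h → (k : ℕ∞) ≤ Ng (g * h))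

/-- The set `Z_𝒰` of sequences whose coordinates need more and more conjugates
to normally generate, along `𝒰`. -/
def ZU (G : ℕ → Type) [∀ n, Group (G n)] (U : Ultrafilter ℕ) : Set (∀ n, G n) :=
  {g | ∀ k : ℕ, {n | (k : ℕ∞) < Ng (g n)} ∈ U}

section Aux
variable {H : Type*} [Group H] {K : Type*} [Group K]

lemma CN_mono {g : H} {m N : ℕ} (h : m ≤ N) : CN m g ⊆ CN N g := by
  intro x hx
  simp only [CN, Set.mem_iUnion] at hx ⊢
  obtain ⟨j, hj, hx⟩ := hx
  exact ⟨j, hj.trans h, hx⟩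

lemma Ng_le_iff {g : H} {k : ℕ} : Ng g ≤ (k : ℕ∞) ↔ CN k g = Set.univ := by
  constructor
  · intro h
    by_contra hc
    have hge : ((k + 1 : ℕ) : ℕ∞) ≤ Ng g := by
      apply le_sInf
      rintro x ⟨m, rfl, hm⟩
      have hmk : ¬ m ≤ k := fun hle => hc (Set.eq_univ_of_univ_subset (hm ▸ CN_mono hle))
      exact_mod_cast Nat.succ_le_of_lt (Nat.lt_of_not_le hmk)
    exact absurd (hge.trans h) (by exact_mod_cast Nat.not_succ_le_self k)
  · intro h
    exact sInf_le ⟨k, rfl, h⟩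

lemma lt_Ng_iff {g : H} {k : ℕ} : (k : ℕ∞) < Ng g ↔ CN k g ≠ Set.univ := by
  rw [lt_iff_not_ge]
  exact not_congr Ng_le_iff

lemma conjSet_inv (g : H) :
    {x | IsConj g⁻¹ x} ∪ {x | IsConj g⁻¹⁻¹ x} = {x | IsConj g x} ∪ {x | IsConj g⁻¹ x} := by
  rw [inv_inv, Set.union_comm]

lemma CN_inv (g : H) (m : ℕ) : CN m g⁻¹ = CN m g := by
  unfold CN; rw [conjSet_inv]

lemma Ng_inv (g : H) : Ng g⁻¹ = Ng g := by
  unfold Ng; congr 1; ext x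
  simp only [Set.mem_setOf_eq, CN_inv]

lemma conjSet_conj (t g : H) :
    {x | IsConj (t * g * t⁻¹) x} ∪ {x | IsConj (t * g * t⁻¹)⁻¹ x}
      = {x | IsConj g x} ∪ {x | IsConj g⁻¹ x} := by
  have h1 : IsConj g (t * g * t⁻¹) := isConj_iff.mpr ⟨t, rfl⟩
  have h2 : IsConj g⁻¹ (t * g * t⁻¹)⁻¹ := by
    have he : (t * g * t⁻¹)⁻¹ = t * g⁻¹ * t⁻¹ := by group
    rw [he]; exact isConj_iff.mpr ⟨t, rfl⟩
  ext x
  simp only [Set.mem_union, Set.mem_setOf_eq]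
  constructor
  · rintro (h | h)
    exacts [Or.inl (h1.trans h), Or.inr (h2.trans h)]
  · rintro (h | h)
    exacts [Or.inl (h1.symm.trans h), Or.inr (h2.symm.trans h)]

lemma CN_conj (t g : H) (m : ℕ) : CN m (t * g * t⁻¹) = CN m g := by
  unfold CN; rw [conjSet_conj]

lemma Ng_conj (t g : H) : Ng (t * g * t⁻¹) = Ng g := by
  unfold Ng; congr 1; ext x
  simp only [Set.mem_setOf_eq, CN_conj]

lemma CN_one_ne_univ [Nontrivial H] (k : ℕ) : CN k (1 : H) ≠ Set.univ := by
  have hsub : CN k (1 : H) ⊆ {1} := by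
    intro x hx
    simp only [CN, Set.mem_iUnion] at hx
    obtain ⟨j, _, hx⟩ := hx
    have hS : ({x : H | IsConj 1 x} ∪ {x | IsConj 1⁻¹ x}) ⊆ {1} := by
      rintro y (hy | hy)
      · obtain ⟨c, hc⟩ := isConj_iff.mp hy
        simp only [mul_one] at hc
        simp [← hc]
      · obtain ⟨c, hc⟩ := isConj_iff.mp hy
        simp only [inv_one, mul_one] at hc
        simp [← hc]
    have := Set.pow_subset_pow_left hS (n := j) hx
    rwa [Set.singleton_one, one_pow] at this
  intro h
  obtain ⟨a, ha⟩ := exists_ne (1 : H)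
  exact ha (hsub (h ▸ Set.mem_univ a))

lemma lt_Ng_one [Nontrivial H] (k : ℕ) : (k : ℕ∞) < Ng (1 : H) :=
  lt_Ng_iff.mpr (CN_one_ne_univ k)

lemma pointwise_isConj {ι : Type*} {G : ι → Type*} [∀ i, Group (G i)] {a b : ∀ i, G i}
    (h : ∀ i, IsConj (a i) (b i)) : IsConj a b := by
  choose t ht using fun i => isConj_iff.mp (h i)
  exact isConj_iff.mpr ⟨t, funext ht⟩

end Aux

/-- For a family of nontrivial groups with the `(⋆)`-property and a
nonprincipal ultrafilter `𝒰`, the set `Z_𝒰` is (the carrier of) a normal subgroup of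
`∏_n G_n`, and the quotient `(∏_n G_n)/Z_𝒰` is a nontrivial boundedly simple group. -/
theorem statement15 (G : ℕ → Type) [∀ n, Group (G n)]
    (hnt : ∀ n, Nontrivial (G n)) (hstar : StarProp G)
    (U : Ultrafilter ℕ) (hU : (U : Filter ℕ) ≤ Filter.cofinite) :
    (∃ Z : Subgroup (∀ n, G n), (Z : Set (∀ n, G n)) = ZU G U) ∧
    (∀ Z : Subgroup (∀ n, G n), (Z : Set (∀ n, G n)) = ZU G U → Z.Normal) ∧
    (∀ Z : Subgroup (∀ n, G n), (Z : Set (∀ n, G n)) = ZU G U → ∀ [Z.Normal],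
      Nontrivial ((∀ n, G n) ⧸ Z) ∧
      ∀ x : (∀ n, G n) ⧸ Z, x ≠ 1 → ∃ N : ℕ, CN N x = Set.univ) := by
  classical
  obtain ⟨hstar1, hstar2⟩ := hstar
  have hone : (1 : ∀ n, G n) ∈ ZU G U := by
    intro k
    have he : {n | (k : ℕ∞) < Ng ((1 : ∀ n, G n) n)} = Set.univ := by
      refine Set.eq_univ_of_forall fun n => ?_
      haveI := hnt n
      exact lt_Ng_one k
    rw [he]; exact univ_mem
  have hmul : ∀ g h : ∀ n, G n, g ∈ ZU G U → h ∈ ZU G U → g * h ∈ ZU G U := by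
    intro g h hg hh k
    obtain ⟨l, hl⟩ := hstar2 (k + 1)
    have hmem : ({n | (l : ℕ∞) < Ng (g n)} ∩ {n | (l : ℕ∞) < Ng (h n)} : Set ℕ) ∈ U :=
      inter_mem (hg l) (hh l)
    refine mem_of_superset hmem ?_
    rintro n ⟨hgn, hhn⟩
    have hx := hl n (g n) (h n) (le_of_lt hgn) (le_of_lt hhn)
    show (k : ℕ∞) < Ng (g n * h n)
    have hlt : (k : ℕ∞) < ((k + 1 : ℕ) : ℕ∞) := by exact_mod_cast Nat.lt_succ_self k
    exact lt_of_lt_of_le hlt hx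
  have hinv : ∀ g : ∀ n, G n, g ∈ ZU G U → g⁻¹ ∈ ZU G U := by
    intro g hg k
    have he : {n | (k : ℕ∞) < Ng ((g⁻¹) n)} = {n | (k : ℕ∞) < Ng (g n)} := by
      simp only [Pi.inv_apply, Ng_inv]
    rw [he]; exact hg k
  have memiff : ∀ (Z : Subgroup (∀ n, G n)), (Z : Set (∀ n, G n)) = ZU G U →
      ∀ a, a ∈ Z ↔ a ∈ ZU G U := by
    intro Z hZ a
    rw [← SetLike.mem_coe, hZ]
  let Zgrp : Subgroup (∀ n, G n) :=
    { carrier := ZU G U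
      mul_mem' := fun ha hb => hmul _ _ ha hb
      one_mem' := hone
      inv_mem' := fun ha => hinv _ ha }
  refine ⟨⟨Zgrp, rfl⟩, ?_, ?_⟩
  · intro Z hZ
    constructor
    intro z hz t
    rw [memiff Z hZ] at hz ⊢
    intro k
    have he : {n | (k : ℕ∞) < Ng ((t * z * t⁻¹) n)} = {n | (k : ℕ∞) < Ng (z n)} := by
      simp only [Pi.mul_apply, Pi.inv_apply, Ng_conj]
    rw [he]; exact hz k
  · intro Z hZ _inst
    have memiffZ := memiff Z hZ
    have hmk_eq : ∀ z w : ∀ n, G n, {n | z n = w n} ∈ U →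
        (QuotientGroup.mk z : (∀ n, G n) ⧸ Z) = QuotientGroup.mk w := by
      intro z w hzw
      refine (QuotientGroup.eq).mpr ((memiffZ _).mpr ?_)
      intro k'
      refine mem_of_superset hzw ?_
      intro n hn
      have h1 : (z⁻¹ * w) n = 1 := by
        simp only [Pi.mul_apply, Pi.inv_apply]
        rw [show z n = w n from hn]
        exact inv_mul_cancel _
      show (k' : ℕ∞) < Ng ((z⁻¹ * w) n)
      rw [h1]
      haveI := hnt n
      exact lt_Ng_one k'
    constructor
    · -- nontrivial
      obtain ⟨N0, hN0⟩ := hstar1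
      choose g0 hg0 using hN0
      have hne : (QuotientGroup.mk g0 : (∀ n, G n) ⧸ Z) ≠ 1 := by
        intro h1
        have hz : g0 ∈ ZU G U := (memiffZ g0).mp ((QuotientGroup.eq_one_iff g0).mp h1)
        have h2 := hz N0
        have he : {n | (N0 : ℕ∞) < Ng (g0 n)} = (∅ : Set ℕ) := by
          refine Set.eq_empty_iff_forall_notMem.mpr fun n hn => ?_
          exact absurd (Ng_le_iff.mpr (hg0 n)) (not_le_of_gt hn)
        rw [he] at h2
        exact absurd h2 (Ultrafilter.empty_notMem (f := U))
      exact ⟨⟨QuotientGroup.mk g0, 1, hne⟩⟩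
    · -- boundedly simple
      intro x hx
      obtain ⟨g, rfl⟩ := QuotientGroup.mk_surjective x
      have hgZ : g ∉ ZU G U := fun hmem =>
        hx ((QuotientGroup.eq_one_iff g).mpr ((memiffZ g).mpr hmem))
      rw [ZU, Set.mem_setOf_eq, not_forall] at hgZ
      obtain ⟨k, hk⟩ := hgZ
      have hA : ({n | (k : ℕ∞) < Ng (g n)}ᶜ : Set ℕ) ∈ U :=
        Ultrafilter.compl_mem_iff_notMem.mpr hk
      refine ⟨k, Set.eq_univ_of_forall fun y => ?_⟩
      obtain ⟨h, rfl⟩ := QuotientGroup.mk_surjective y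
      set S : ∀ n, Set (G n) := fun n => {x | IsConj (g n) x} ∪ {x | IsConj (g n)⁻¹ x} with hS
      have hext : ∀ n, Ng (g n) ≤ (k : ℕ∞) → ∃ j, j ≤ k ∧ h n ∈ S n ^ j := by
        intro n hn
        have hcn : CN k (g n) = Set.univ := Ng_le_iff.mp hn
        have hin : h n ∈ CN k (g n) := hcn ▸ Set.mem_univ _
        simp only [CN, Set.mem_iUnion] at hin
        obtain ⟨j, hj, hmem⟩ := hin
        exact ⟨j, hj, hmem⟩
      let m : ℕ → ℕ := fun n => if hn : Ng (g n) ≤ (k : ℕ∞) then (hext n hn).choose else 0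
      have hm_le : ∀ n (hn : Ng (g n) ≤ (k : ℕ∞)), m n ≤ k := fun n hn => by
        simp only [m, dif_pos hn]; exact (hext n hn).choose_spec.1
      have hcover : ({n | (k : ℕ∞) < Ng (g n)}ᶜ : Set ℕ) ⊆
          ⋃ j ∈ Set.Iic k, {n | Ng (g n) ≤ (k : ℕ∞) ∧ m n = j} := by
        intro n hn
        have hn' : Ng (g n) ≤ (k : ℕ∞) := not_lt.mp hn
        exact Set.mem_biUnion (hm_le n hn') ⟨hn', rfl⟩
      have hUj : (⋃ j ∈ Set.Iic k, {n | Ng (g n) ≤ (k : ℕ∞) ∧ m n = j}) ∈ U :=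
        mem_of_superset hA hcover
      obtain ⟨j, hjk, hBU⟩ := (Ultrafilter.finite_biUnion_mem_iff (Set.finite_Iic k)).mp hUj
      have hBmem : ∀ n, n ∈ {n | Ng (g n) ≤ (k : ℕ∞) ∧ m n = j} → h n ∈ S n ^ j := by
        intro n hn
        obtain ⟨hn1, hn2⟩ := hn
        have hc := (hext n hn1).choose_spec.2
        rwa [show (hext n hn1).choose = m n by simp [m, dif_pos hn1], hn2] at hc
      have htup : ∀ n, n ∈ {n | Ng (g n) ≤ (k : ℕ∞) ∧ m n = j} →
          ∃ f : Fin j → (S n), (List.ofFn fun i => (f i : G n)).prod = h n :=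
        fun n hn => Set.mem_pow.mp (hBmem n hn)
      let F : Fin j → (∀ n, G n) := fun i n =>
        if hn : n ∈ {n | Ng (g n) ≤ (k : ℕ∞) ∧ m n = j} then ((htup n hn).choose i : G n)
        else g n
      have hprod : {n | ((List.ofFn F).prod) n = h n} ∈ U := by
        refine mem_of_superset hBU ?_
        intro n hn
        show (List.ofFn F).prod n = h n
        rw [Pi.list_prod_apply, List.map_ofFn]
        have he : (List.ofFn ((fun f : ∀ n, G n => f n) ∘ F))
            = List.ofFn (fun i => ((htup n hn).choose i : G n)) := by
          congr 1
          funext i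
          show F i n = _
          simp only [F, dif_pos hn]
        rw [he, (htup n hn).choose_spec]
      have hFd : ∀ (i : Fin j) n, IsConj (g n) (F i n) ∨ IsConj (g n)⁻¹ (F i n) := by
        intro i n
        by_cases hn : n ∈ {n | Ng (g n) ≤ (k : ℕ∞) ∧ m n = j}
        · have hmem := ((htup n hn).choose i).2
          simp only [hS, Set.mem_union, Set.mem_setOf_eq] at hmem
          simpa only [F, dif_pos hn] using hmem
        · simp only [F, dif_neg hn]
          exact Or.inl (IsConj.refl _)
      have hclass : ∀ i : Fin j, (QuotientGroup.mk (F i) : (∀ n, G n) ⧸ Z) ∈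
          ({z | IsConj (QuotientGroup.mk g) z} ∪
            {z | IsConj (QuotientGroup.mk g : (∀ n, G n) ⧸ Z)⁻¹ z}) := by
        intro i
        rcases U.mem_or_compl_mem {n | IsConj (g n) (F i n)} with hD | hD
        · set F' : ∀ n, G n := fun n => if IsConj (g n) (F i n) then F i n else g n with hF'
          have hconj : IsConj g F' := by
            apply pointwise_isConj
            intro n
            by_cases hc : IsConj (g n) (F i n)
            · simpa only [hF', if_pos hc] using hc
            · simp only [hF', if_neg hc]
              exact IsConj.refl _
          have heq : (QuotientGroup.mk F' : (∀ n, G n) ⧸ Z) = QuotientGroup.mk (F i) := by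
            apply hmk_eq
            refine mem_of_superset hD ?_
            intro n hn
            show F' n = F i n
            simp only [hF', if_pos (show IsConj (g n) (F i n) from hn)]
          refine Or.inl ?_
          show IsConj (QuotientGroup.mk g) (QuotientGroup.mk (F i) : (∀ n, G n) ⧸ Z)
          rw [← heq]
          exact (QuotientGroup.mk' Z).map_isConj hconj
        · set F' : ∀ n, G n := fun n => if IsConj (g n)⁻¹ (F i n) then F i n else (g n)⁻¹
            with hF'
          have hconj : IsConj g⁻¹ F' := by
            apply pointwise_isConj
            intro n
            show IsConj (g n)⁻¹ (F' n)
            by_cases hc : IsConj (g n)⁻¹ (F i n)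
            · simpa only [hF', if_pos hc] using hc
            · simp only [hF', if_neg hc]
              exact IsConj.refl _
          have heq : (QuotientGroup.mk F' : (∀ n, G n) ⧸ Z) = QuotientGroup.mk (F i) := by
            apply hmk_eq
            refine mem_of_superset hD ?_
            intro n hn
            have hn' : ¬ IsConj (g n) (F i n) := hn
            have hc : IsConj (g n)⁻¹ (F i n) := (hFd i n).resolve_left hn'
            show F' n = F i n
            simp only [hF', if_pos hc]
          refine Or.inr ?_
          show IsConj (QuotientGroup.mk g : (∀ n, G n) ⧸ Z)⁻¹ (QuotientGroup.mk (F i))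
          rw [← heq]
          have := (QuotientGroup.mk' Z).map_isConj hconj
          simpa using this
      have h2 : (QuotientGroup.mk ((List.ofFn F).prod) : (∀ n, G n) ⧸ Z)
          = (List.ofFn fun i => (QuotientGroup.mk (F i) : (∀ n, G n) ⧸ Z)).prod := by
        have hm := map_list_prod (QuotientGroup.mk' Z) (List.ofFn F)
        rw [List.map_ofFn] at hm
        exact hm
      have h1 : (QuotientGroup.mk ((List.ofFn F).prod) : (∀ n, G n) ⧸ Z)
          = QuotientGroup.mk h := hmk_eq _ _ hprod
      simp only [CN, Set.mem_iUnion]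
      refine ⟨j, Set.mem_Iic.mp hjk, ?_⟩
      refine Set.mem_pow.mpr ⟨fun i => ⟨QuotientGroup.mk (F i), hclass i⟩, ?_⟩
      show (List.ofFn fun i => (QuotientGroup.mk (F i) : (∀ n, G n) ⧸ Z)).prod
        = QuotientGroup.mk h
      rw [← h2, h1]
end
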